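/- Variance decomposition for the PAGE estimator: let f = (1/n)∑ᵢ fᵢ with each fᵢ differentiable, and fix x, x⁺ ∈ X and g ∈ X. If i is chosen uniformly at random from {1,…,n} and g⁺ := g + ∇f_i(x⁺) − ∇f_i(x), then E[‖g⁺ − ∇f(x⁺)‖²] = ‖g − ∇f(x)‖² + (1/n)∑ᵢ ‖∇fᵢ(x⁺) − ∇fᵢ(x) − ∇f(x⁺) + ∇f(x)‖². -/

import Mathlib

open scoped RealInnerProductSpace

lemma page_grad_avg {X : Type*} [NormedAddCommGroup X] [InnerProductSpace ℝ X]
    [FiniteDimensional ℝ X] (n : ℕ) (f : Fin n → X → ℝ)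
    (hdiff : ∀ i, Differentiable ℝ (f i)) (y : X) :
    gradient (fun z => (1 / n : ℝ) * ∑ i, f i z) y
      = (1 / n : ℝ) • ∑ i, gradient (f i) y := by
  have h1 : HasFDerivAt (fun z => ∑ i, f i z)
      (∑ i, InnerProductSpace.toDual ℝ X (gradient (f i) y)) y :=
    HasFDerivAt.fun_sum fun i _ => ((hdiff i y).hasGradientAt).hasFDerivAt
  have h2 := h1.const_mul (1 / n : ℝ)
  have h3 : HasGradientAt (fun z => (1 / n : ℝ) * ∑ i, f i z)
      ((1 / n : ℝ) • ∑ i, gradient (f i) y) y := by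
    rw [hasGradientAt_iff_hasFDerivAt, map_smul, map_sum]
    exact h2
  exact h3.gradient

/-- Variance decomposition for the PAGE estimator: with `i` uniform in `{1,…,n}` and
`g⁺ = g + ∇fᵢ(x⁺) − ∇fᵢ(x)`,
`E‖g⁺ − ∇f(x⁺)‖² = ‖g − ∇f(x)‖² + (1/n)∑ᵢ‖∇fᵢ(x⁺) − ∇fᵢ(x) − ∇f(x⁺) + ∇f(x)‖²`. -/
theorem page_estimator_variance_decomposition
    {X : Type*} [NormedAddCommGroup X] [InnerProductSpace ℝ X]
    [FiniteDimensional ℝ X]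
    (n : ℕ) (hn : 0 < n) (f : Fin n → X → ℝ)
    (hdiff : ∀ i, Differentiable ℝ (f i))
    (F : X → ℝ) (hF : F = fun y => (1 / n : ℝ) * ∑ i, f i y)
    (x xp g : X) :
    (1 / n : ℝ) * ∑ i, ‖(g + gradient (f i) xp - gradient (f i) x) - gradient F xp‖ ^ 2 =
      ‖g - gradient F x‖ ^ 2 +
        (1 / n : ℝ) * ∑ i,
          ‖gradient (f i) xp - gradient (f i) x - gradient F xp + gradient F x‖ ^ 2 := by
  have hn' : (n : ℝ) ≠ 0 := Nat.cast_ne_zero.mpr hn.ne'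
  have hgF : ∀ y, gradient F y = (1 / n : ℝ) • ∑ i, gradient (f i) y := by
    intro y; rw [hF]; exact page_grad_avg n f hdiff y
  set a := g - gradient F x with ha
  set d := fun i => gradient (f i) xp - gradient (f i) x - gradient F xp + gradient F x
    with hd
  have hsum : ∑ i, d i = 0 := by
    have h1 : ∑ i, gradient (f i) xp = (n : ℝ) • gradient F xp := by
      rw [hgF xp, smul_smul]; field_simp; rw [one_smul]
    have h2 : ∑ i, gradient (f i) x = (n : ℝ) • gradient F x := by
      rw [hgF x, smul_smul]; field_simp; rw [one_smul]
    simp only [hd, Finset.sum_add_distrib, Finset.sum_sub_distrib, h1, h2,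
      Finset.sum_const, Finset.card_univ, Fintype.card_fin, ← Nat.cast_smul_eq_nsmul ℝ]
    abel
  have hterm : ∀ i, (g + gradient (f i) xp - gradient (f i) x - gradient F xp) = a + d i := by
    intro i; simp only [ha, hd]; abel
  have key : ∀ i, ‖(g + gradient (f i) xp - gradient (f i) x) - gradient F xp‖ ^ 2
      = ‖a‖ ^ 2 + 2 * ⟪a, d i⟫ + ‖d i‖ ^ 2 := by
    intro i
    rw [show (g + gradient (f i) xp - gradient (f i) x) - gradient F xp = a + d i from hterm i]
    exact norm_add_sq_real a (d i)
  simp only [key, Finset.sum_add_distrib, Finset.sum_const, Finset.card_univ,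
    Fintype.card_fin, nsmul_eq_mul, ← Finset.mul_sum, ← inner_sum, hsum, inner_zero_right,
    mul_zero]
  field_simp
  ring
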